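/- A finite simple graph G is a threshold graph if and only if for every three distinct vertices i, j, k of G: if deg(i) ≥ deg(j) and jk is an edge, then ik is an edge. -/

import Mathlib

open SimpleGraph

/-- The graph `2K₂` on four vertices: two disjoint edges. -/
def twoK2 : SimpleGraph (Fin 4) :=
  SimpleGraph.fromRel (fun a b => (a = 0 ∧ b = 1) ∨ (a = 2 ∧ b = 3))

/-- A graph is a threshold graph if it has no induced subgraph isomorphic to
`2K₂`, `C₄` or `P₄`.  (Graph embeddings are induced-subgraph embeddings.) -/
def IsThreshold {V : Type} (G : SimpleGraph V) : Prop :=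
  IsEmpty (twoK2 ↪g G) ∧ IsEmpty (SimpleGraph.cycleGraph 4 ↪g G) ∧
    IsEmpty (SimpleGraph.pathGraph 4 ↪g G)

noncomputable def deg {n : ℕ} (G : SimpleGraph (Fin n)) (v : Fin n) : ℕ :=
  letI := Classical.decRel G.Adj
  G.degree v

lemma deg_eq {n : ℕ} (G : SimpleGraph (Fin n)) (v : Fin n)
    [inst : Fintype (G.neighborSet v)] : deg G v = G.degree v := by
  unfold deg
  congr!

private def mkEmb {H : SimpleGraph (Fin 4)} {V : Type} {G : SimpleGraph V}
    (f : Fin 4 → V) (hinj : Function.Injective f)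
    (h : ∀ a b, G.Adj (f a) (f b) ↔ H.Adj a b) : H ↪g G :=
  { toFun := f, inj' := hinj, map_rel_iff' := h _ _ }

private lemma inj4 {V : Type} {a b c d : V}
    (h1 : a ≠ b) (h2 : a ≠ c) (h3 : a ≠ d) (h4 : b ≠ c) (h5 : b ≠ d) (h6 : c ≠ d) :
    Function.Injective (![a, b, c, d]) := by
  intro x y
  fin_cases x <;> fin_cases y <;>
    simp_all [h1.symm, h2.symm, h3.symm, h4.symm, h5.symm, h6.symm]

/-- From a 2K₂ configuration. -/
private def emb2K2 {V : Type} {G : SimpleGraph V} {a b c d : V}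
    (hab : G.Adj a b) (hcd : G.Adj c d)
    (hac : ¬G.Adj a c) (had : ¬G.Adj a d) (hbc : ¬G.Adj b c) (hbd : ¬G.Adj b d)
    (n2 : a ≠ c) (n3 : a ≠ d) (n4 : b ≠ c) (n5 : b ≠ d) :
    twoK2 ↪g G := by
  refine mkEmb ![a, b, c, d] (inj4 hab.ne n2 n3 n4 n5 hcd.ne) ?_
  intro x y
  fin_cases x <;> fin_cases y <;>
    simp_all [twoK2, SimpleGraph.fromRel_adj, G.adj_comm a b, G.adj_comm c d,
      G.adj_comm a c, G.adj_comm a d, G.adj_comm b c, G.adj_comm b d,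
      G.irrefl, Fin.ext_iff, -Fin.val_eq_zero_iff] <;> decide

/-- Cycle a-b-c-d-a. -/
private def embC4 {V : Type} {G : SimpleGraph V} {a b c d : V}
    (hab : G.Adj a b) (hbc : G.Adj b c) (hcd : G.Adj c d) (hda : G.Adj d a)
    (hac : ¬G.Adj a c) (hbd : ¬G.Adj b d)
    (n2 : a ≠ c) (n5 : b ≠ d) :
    SimpleGraph.cycleGraph 4 ↪g G := by
  refine mkEmb ![a, b, c, d] (inj4 hab.ne n2 (G.ne_of_adj hda.symm) hbc.ne n5 hcd.ne) ?_
  intro x y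
  fin_cases x <;> fin_cases y <;>
    simp_all [SimpleGraph.cycleGraph_adj, G.adj_comm a b, G.adj_comm b c,
      G.adj_comm c d, G.adj_comm d a, G.adj_comm a c, G.adj_comm b d,
      G.irrefl] <;> decide

/-- Path a-b-c-d. -/
private def embP4 {V : Type} {G : SimpleGraph V} {a b c d : V}
    (hab : G.Adj a b) (hbc : G.Adj b c) (hcd : G.Adj c d)
    (hac : ¬G.Adj a c) (had : ¬G.Adj a d) (hbd : ¬G.Adj b d)
    (n2 : a ≠ c) (n3 : a ≠ d) (n5 : b ≠ d) :
    SimpleGraph.pathGraph 4 ↪g G := by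
  refine mkEmb ![a, b, c, d] (inj4 hab.ne n2 n3 hbc.ne n5 hcd.ne) ?_
  intro x y
  fin_cases x <;> fin_cases y <;>
    simp_all [SimpleGraph.pathGraph_adj, G.adj_comm a b, G.adj_comm b c,
      G.adj_comm c d, G.adj_comm a c, G.adj_comm a d, G.adj_comm b d,
      G.irrefl] <;> decide

theorem stmt10 {n : ℕ} (G : SimpleGraph (Fin n)) :
    IsThreshold G ↔
      ∀ i j k : Fin n, i ≠ j → j ≠ k → i ≠ k →
        deg G j ≤ deg G i → G.Adj j k → G.Adj i k := by
  classical
  constructor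
  · rintro ⟨h2, hC, hP⟩ i j k hij hjk hik hdeg hadj
    by_contra hik'
    -- counting argument
    simp only [deg_eq] at hdeg
    set A := (G.neighborFinset i).erase j with hA
    set B := (G.neighborFinset j).erase i with hB
    have hcard : B.card ≤ A.card := by
      by_cases hija : G.Adj i j
      · rw [hA, hB, Finset.card_erase_of_mem (by simpa using hija.symm),
          Finset.card_erase_of_mem (by simpa using hija)]

        simp only [SimpleGraph.card_neighborFinset_eq_degree]
        omega
      · rw [hA, hB, Finset.erase_eq_of_notMem (by simpa using fun h => hija (G.adj_symm h)),
          Finset.erase_eq_of_notMem (by simpa using hija)]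
        simpa using hdeg
    have hkB : k ∈ B := by
      rw [hB]; exact Finset.mem_erase.mpr ⟨(Ne.symm hik), by simpa using hadj⟩
    have hkA : k ∉ A := by
      rw [hA]; simp [hik']
    have hnsub : ¬ A ⊆ B := by
      intro hsub
      have h1 : A ⊆ B.erase k := fun x hx =>
        Finset.mem_erase.mpr ⟨fun h => hkA (h ▸ hx), hsub hx⟩
      have := Finset.card_le_card h1
      rw [Finset.card_erase_of_mem hkB] at this
      have : 0 < B.card := Finset.card_pos.mpr ⟨k, hkB⟩
      omega
    obtain ⟨l, hlA, hlB⟩ := Finset.not_subset.mp hnsub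
    rw [hA, Finset.mem_erase] at hlA
    obtain ⟨hlj, hli⟩ := hlA
    rw [SimpleGraph.mem_neighborFinset] at hli
    have hli' : G.Adj i l := hli
    have hlniB : ¬ G.Adj j l := by
      intro h
      exact hlB (by rw [hB]; exact Finset.mem_erase.mpr ⟨hli'.ne', by simpa using h⟩)
    have hlk : l ≠ k := fun h => hkA (by
      rw [hA]; exact Finset.mem_erase.mpr ⟨h ▸ hlj, by simpa using h ▸ hli⟩)
    -- four distinct vertices i j k l with i~l, j~k, ¬i~k, ¬j~l
    by_cases hijA : G.Adj i j
    · by_cases hlkA : G.Adj l k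
      · -- C4: l-i-j-k-l
        exact hC.false (embC4 hli'.symm hijA hadj hlkA.symm
          (fun h => hlniB h.symm) hik' hlj hik)
      · -- P4: l-i-j-k
        exact hP.false (embP4 hli'.symm hijA hadj
          (fun h => hlniB h.symm) hlkA hik' hlj hlk hik)
    · by_cases hlkA : G.Adj l k
      · -- P4: i-l-k-j
        exact hP.false (embP4 hli' hlkA hadj.symm hik' hijA
          (fun h => hlniB h.symm) hik hij hlj)
      · -- 2K2: {i,l},{j,k}
        exact h2.false (emb2K2 hli' hadj hijA hik'
          (fun h => hlniB h.symm) hlkA hij hik hlj hlk)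
  · intro hcond
    have key : ∀ (u x v y : Fin n), u ≠ v → u ≠ x → u ≠ y → v ≠ x → v ≠ y → x ≠ y →
        G.Adj u x → ¬G.Adj u y → G.Adj v y → ¬G.Adj v x → False := by
      intro u x v y huv hux huy hvx hvy hxy hUX hUY hVY hVX
      rcases le_total (deg G v) (deg G u) with h | h
      · exact hUY (hcond u v y huv hvy huy h hVY)
      · exact hVX (hcond v u x huv.symm hux hvx h hUX)
    refine ⟨⟨?_⟩, ⟨?_⟩, ⟨?_⟩⟩
    · intro f
      have inj := f.injective
      have adj : ∀ a b : Fin 4, G.Adj (f a) (f b) ↔ twoK2.Adj a b := fun a b => f.map_rel_iff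
      refine key (f 0) (f 1) (f 2) (f 3)
        (fun h => ?_) (fun h => ?_) (fun h => ?_) (fun h => ?_) (fun h => ?_) (fun h => ?_)
        ((adj 0 1).mpr (by rw [twoK2, SimpleGraph.fromRel_adj]; decide))
        (fun h => (by rw [twoK2, SimpleGraph.fromRel_adj]; decide : ¬ twoK2.Adj 0 3) ((adj 0 3).mp h))
        ((adj 2 3).mpr (by rw [twoK2, SimpleGraph.fromRel_adj]; decide))
        (fun h => (by rw [twoK2, SimpleGraph.fromRel_adj]; decide : ¬ twoK2.Adj 2 1) ((adj 2 1).mp h))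
        <;> exact absurd (inj h) (by simp)
    · intro f
      have inj := f.injective
      have adj : ∀ a b : Fin 4, G.Adj (f a) (f b) ↔ (SimpleGraph.cycleGraph 4).Adj a b :=
        fun a b => f.map_rel_iff
      -- u=f 0, x = f 3, v = f 1, y = f 2
      refine key (f 0) (f 3) (f 1) (f 2)
        (fun h => ?_) (fun h => ?_) (fun h => ?_) (fun h => ?_) (fun h => ?_) (fun h => ?_)
        ((adj 0 3).mpr (by rw [SimpleGraph.cycleGraph_adj]; decide))
        (fun h => (by rw [SimpleGraph.cycleGraph_adj]; decide : ¬ (SimpleGraph.cycleGraph 4).Adj 0 2) ((adj 0 2).mp h))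
        ((adj 1 2).mpr (by rw [SimpleGraph.cycleGraph_adj]; decide))
        (fun h => (by rw [SimpleGraph.cycleGraph_adj]; decide : ¬ (SimpleGraph.cycleGraph 4).Adj 1 3) ((adj 1 3).mp h))
        <;> exact absurd (inj h) (by simp)
    · intro f
      have inj := f.injective
      have adj : ∀ a b : Fin 4, G.Adj (f a) (f b) ↔ (SimpleGraph.pathGraph 4).Adj a b :=
        fun a b => f.map_rel_iff
      -- u=f 0, x=f 1, v=f 3, y=f 2
      refine key (f 0) (f 1) (f 3) (f 2)
        (fun h => ?_) (fun h => ?_) (fun h => ?_) (fun h => ?_) (fun h => ?_) (fun h => ?_)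
        ((adj 0 1).mpr (by rw [SimpleGraph.pathGraph_adj]; decide))
        (fun h => (by rw [SimpleGraph.pathGraph_adj]; decide : ¬ (SimpleGraph.pathGraph 4).Adj 0 2) ((adj 0 2).mp h))
        ((adj 3 2).mpr (by rw [SimpleGraph.pathGraph_adj]; decide))
        (fun h => (by rw [SimpleGraph.pathGraph_adj]; decide : ¬ (SimpleGraph.pathGraph 4).Adj 3 1) ((adj 3 1).mp h))
        <;> exact absurd (inj h) (by simp)
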